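/- The number W(n, δ) of words X of length n over the 2k-letter alphabet with ℓ(X) < nδ satisfies W(n,δ) ≤ C(n, r) · (2k)^r · |T_{2m}|, where r = n - 2m, m = ⌈(n - nδ)/2⌉, and T_{2m} is the set of words of length 2m representing the identity in F_k. -/

import Mathlib

open scoped BigOperators

abbrev Letter (k : ℕ) := Fin k × Bool

def Letter.bar {k : ℕ} (x : Letter k) : Letter k := (x.1, !x.2)

/-- `M` is an (incomplete) non-crossing matching of the word `X`,
pairing letters with their inverse letters. -/
def IsNCMatching {k : ℕ} (X : List (Letter k)) (M : Finset (ℕ × ℕ)) : Prop :=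
  (∀ p ∈ M, p.1 < p.2 ∧ p.2 < X.length ∧ X[p.1]? = (X[p.2]?).map Letter.bar) ∧
  (∀ p ∈ M, ∀ q ∈ M, p ≠ q → p.1 ≠ q.1 ∧ p.1 ≠ q.2 ∧ p.2 ≠ q.1 ∧ p.2 ≠ q.2) ∧
  (∀ p ∈ M, ∀ q ∈ M, ¬ (p.1 < q.1 ∧ q.1 < p.2 ∧ p.2 < q.2))

/-- minimal number of unmatched letters over all non-crossing matchings of `X`. -/
noncomputable def ell {k : ℕ} (X : List (Letter k)) : ℕ :=
  sInf {m | ∃ M : Finset (ℕ × ℕ), IsNCMatching X M ∧ m = X.length - 2 * M.card}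

/-- `L_k(n)`: the expected value of `ell` over uniformly random words of length `n`. -/
noncomputable def Lk (k n : ℕ) : ℝ :=
  (∑ w : Fin n → Letter k, (ell (List.ofFn w) : ℝ)) / (2 * k) ^ n

noncomputable def lambda (k : ℕ) : ℝ := ⨅ n : ℕ+, Lk k n / n

theorem test : True := trivial

lemma split_consecutive : ∀ (l : List ℕ), l.Pairwise (· < ·) → ∀ i j : ℕ, i ∈ l → j ∈ l → i < j →
    (∀ t ∈ l, ¬(i < t ∧ t < j)) → ∃ P Q, l = P ++ i :: j :: Q := by
  intro l
  induction l with
  | nil => intro _ i j hi; simp at hi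
  | cons a l ih =>
    intro hl i j hi hj hij hb
    rw [List.pairwise_cons] at hl
    rw [List.mem_cons] at hi hj
    by_cases hai : a = i
    · subst hai
      have hj' : j ∈ l := by
        rcases hj with hj | hj
        · omega
        · exact hj
      match l, hj' with
      | b :: l', hj' =>
        have hbj : b = j := by
          rcases List.mem_cons.mp hj' with h | h
          · omega
          · have h1 : a < b := hl.1 b (by simp)
            have h2 : b < j := (List.pairwise_cons.mp hl.2).1 j h
            exact absurd ⟨h1, h2⟩ (hb b (by simp))
        exact ⟨[], l', by simp [hbj]⟩
    · have hi' : i ∈ l := by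
        rcases hi with h | h
        · omega
        · exact h
      have hai' : a < i := hl.1 i hi'
      have hj' : j ∈ l := by
        rcases hj with h | h
        · omega
        · exact h
      obtain ⟨P, Q, hPQ⟩ := ih hl.2 i j hi' hj' hij (fun t ht => hb t (by simp [ht]))
      exact ⟨a :: P, Q, by rw [hPQ]; rfl⟩

lemma ncm_mono {k : ℕ} {X : List (Letter k)} {M M' : Finset (ℕ × ℕ)} (hs : M' ⊆ M)
    (h : IsNCMatching X M) : IsNCMatching X M' :=
  ⟨fun p hp => h.1 p (hs hp), fun p hp q hq => h.2.1 p (hs hp) q (hs hq),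
   fun p hp q hq => h.2.2 p (hs hp) q (hs hq)⟩

lemma ncm_reduce {k : ℕ} (X : List (Letter k)) :
    ∀ N : ℕ, ∀ M : Finset (ℕ × ℕ), M.card ≤ N →
    IsNCMatching X M → ∀ l : List ℕ, l.Pairwise (· < ·) →
    (∀ p ∈ M, p.1 ∈ l ∧ p.2 ∈ l) →
    (∀ t ∈ l, ∃ p ∈ M, t = p.1 ∨ t = p.2) →
    FreeGroup.mk (l.filterMap fun t => X[t]?) = 1 := by
  intro N
  induction N with
  | zero =>
    intro M hcard _ l _ _ hcover
    have hM : M = ∅ := Finset.card_eq_zero.mp (Nat.le_zero.mp hcard)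
    subst hM
    have hl : l = [] := by
      apply List.eq_nil_iff_forall_not_mem.mpr
      intro t ht
      obtain ⟨p, hp, -⟩ := hcover t ht
      simp at hp
    simp [hl, FreeGroup.one_eq_mk]
  | succ N ih =>
    intro M hcard hM l hl hmem hcover
    rcases M.eq_empty_or_nonempty with rfl | hne
    · have hl0 : l = [] := by
        apply List.eq_nil_iff_forall_not_mem.mpr
        intro t ht
        obtain ⟨p, hp, -⟩ := hcover t ht
        simp at hp
      simp [hl0, FreeGroup.one_eq_mk]
    · obtain ⟨p, hp, hmin⟩ := Finset.exists_min_image M (fun q => q.2 - q.1) hne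
      obtain ⟨hij, hjlen, hXij⟩ := hM.1 p hp
      -- letters at i and j
      obtain ⟨y, hy⟩ : ∃ y, X[p.2]? = some y :=
        ⟨X[p.2]'hjlen, List.getElem?_eq_getElem hjlen⟩
      have hx : X[p.1]? = some (Letter.bar y) := by rw [hXij, hy]; rfl
      -- no matched index strictly between
      have hbtw : ∀ t ∈ l, ¬(p.1 < t ∧ t < p.2) := by
        rintro t ht ⟨h1t, h2t⟩
        obtain ⟨q, hq, hqt⟩ := hcover t ht
        have hpq : p ≠ q := by
          rintro rfl
          rcases hqt with rfl | rfl <;> omega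
        have hd := hM.2.1 p hp q hq hpq
        have hq1 := hM.1 q hq
        have hnc1 := hM.2.2 p hp q hq
        have hnc2 := hM.2.2 q hq p hp
        have hmq := hmin q hq
        rcases hqt with rfl | rfl <;> omega
      obtain ⟨P, Q, hPQ⟩ := split_consecutive l hl p.1 p.2 (hmem p hp).1 (hmem p hp).2 hij hbtw
      -- i, j not in P ++ Q
      have hiP : p.1 ∉ P ++ Q ∧ p.2 ∉ P ++ Q := by
        rw [hPQ] at hl
        rw [List.pairwise_append] at hl
        have h1 := hl.2.1
        rw [List.pairwise_cons] at h1
        have h2 := List.pairwise_cons.mp h1.2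
        constructor <;> rw [List.mem_append] <;> rintro (h | h)
        · exact absurd (hl.2.2 _ h _ (by simp)) (lt_irrefl _)
        · have := h1.1 p.1 (by simp [h]); omega
        · exact absurd (hl.2.2 _ h _ (by simp)) (lt_irrefl _)
        · have := h2.1 p.2 h; omega
      -- apply IH
      have hcard' : (M.erase p).card ≤ N := by
        rw [Finset.card_erase_of_mem hp]
        omega
      have key := ih (M.erase p) hcard' (ncm_mono (Finset.erase_subset _ _) hM) (P ++ Q)
        (hl.sublist (by rw [hPQ]; exact (((Q.sublist_cons_self _).trans
          (List.sublist_cons_self _ _)).append_left P)))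
        (by
          intro q hq
          have hqM := Finset.mem_of_mem_erase hq
          have hpq : p ≠ q := fun h => (Finset.notMem_erase p M) (h ▸ hq)
          have hd := hM.2.1 p hp q hqM hpq
          have := hmem q hqM
          rw [hPQ] at this
          constructor
          · have h1 := this.1
            rw [List.mem_append, List.mem_cons, List.mem_cons] at h1
            rw [List.mem_append]
            rcases h1 with h | h | h | h
            · exact Or.inl h
            · omega
            · omega
            · exact Or.inr h
          · have h1 := this.2
            rw [List.mem_append, List.mem_cons, List.mem_cons] at h1
            rw [List.mem_append]
            rcases h1 with h | h | h | h
            · exact Or.inl h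
            · omega
            · omega
            · exact Or.inr h)
        (by
          intro t ht
          have htl : t ∈ l := by
            rw [hPQ]
            rw [List.mem_append] at ht ⊢
            rcases ht with h | h
            · exact Or.inl h
            · exact Or.inr (by simp [h])
          obtain ⟨q, hq, hqt⟩ := hcover t htl
          refine ⟨q, Finset.mem_erase.mpr ⟨?_, hq⟩, hqt⟩
          rintro rfl
          rcases hqt with rfl | rfl
          · exact hiP.1 ht
          · exact hiP.2 ht)
      -- now compute
      rw [hPQ]
      have hfm : (P ++ p.1 :: p.2 :: Q).filterMap (fun t => X[t]?) =
          (P.filterMap fun t => X[t]?) ++ Letter.bar y :: y :: (Q.filterMap fun t => X[t]?) := by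
        simp [List.filterMap_append, hx, hy]
      rw [hfm]
      have hstep := Quot.sound (@FreeGroup.Red.Step.not (Fin k)
        (P.filterMap fun t => X[t]?) (Q.filterMap fun t => X[t]?) y.1 (!y.2))
      rw [List.filterMap_append] at key
      have : Letter.bar y :: y :: (Q.filterMap fun t => X[t]?) =
          (y.1, !y.2) :: (y.1, !(!y.2)) :: (Q.filterMap fun t => X[t]?) := by
        simp [Letter.bar, Bool.not_not]
      rw [this]
      exact hstep.trans key

lemma exists_identity_subword {k n : ℕ} (w : Fin n → Letter k) (M : Finset (ℕ × ℕ))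
    (hM : IsNCMatching (List.ofFn w) M) :
    ∃ I : Finset (Fin n), I.card = 2 * M.card ∧
      FreeGroup.mk ((I.sort (· ≤ ·)).map w) = 1 := by
  classical
  set J : Finset ℕ := M.image Prod.fst ∪ M.image Prod.snd with hJ
  have hlen : (List.ofFn w).length = n := List.length_ofFn (f := w)
  have hlt : ∀ a ∈ J, a < n := by
    intro a ha
    rw [hJ, Finset.mem_union, Finset.mem_image, Finset.mem_image] at ha
    rcases ha with ⟨p, hp, rfl⟩ | ⟨p, hp, rfl⟩ <;>
      have := hM.1 p hp <;> omega
  refine ⟨J.attachFin hlt, ?_, ?_⟩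
  · rw [Finset.card_attachFin, hJ, Finset.card_union_of_disjoint, Finset.card_image_of_injOn,
      Finset.card_image_of_injOn]
    · omega
    · intro p hp q hq h
      by_contra hne
      exact absurd h (hM.2.1 p hp q hq hne).2.2.2
    · intro p hp q hq h
      by_contra hne
      exact absurd h (hM.2.1 p hp q hq hne).1
    · rw [Finset.disjoint_left]
      rintro a ha hb
      rw [Finset.mem_image] at ha hb
      obtain ⟨p, hp, rfl⟩ := ha
      obtain ⟨q, hq, hqa⟩ := hb
      by_cases hpq : p = q
      · subst hpq
        have := (hM.1 p hp).1
        omega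
      · exact (hM.2.1 p hp q hq hpq).2.1 hqa.symm
  · set I := J.attachFin hlt with hI
    set l : List ℕ := (I.sort (· ≤ ·)).map (fun a : Fin n => (a : ℕ)) with hlo
    have hJmem : ∀ a : Fin n, a ∈ I ↔ (a : ℕ) ∈ J := fun a => Finset.mem_attachFin hlt
    have hmem' : ∀ t : ℕ, t ∈ l ↔ ∃ a : Fin n, (a:ℕ) = t ∧ (t : ℕ) ∈ J := by
      intro t
      rw [hlo, List.mem_map]
      constructor
      · rintro ⟨a, ha, rfl⟩
        exact ⟨a, rfl, (hJmem a).mp (Finset.mem_sort _ |>.mp ha)⟩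
      · rintro ⟨a, rfl, ha⟩
        exact ⟨a, Finset.mem_sort _ |>.mpr ((hJmem a).mpr ha), rfl⟩
    have main := ncm_reduce (List.ofFn w) M.card M le_rfl hM l
      (by
        rw [hlo]
        refine List.Pairwise.map _ (fun a b h => ?_) (Finset.sortedLT_sort I).pairwise
        exact h)
      (by
        intro p hp
        constructor
        · rw [hmem' p.1]
          have h1 : p.1 ∈ J := Finset.mem_union_left _ (Finset.mem_image.mpr ⟨p, hp, rfl⟩)
          exact ⟨⟨p.1, hlt _ h1⟩, rfl, h1⟩
        · rw [hmem' p.2]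
          have h1 : p.2 ∈ J := Finset.mem_union_right _ (Finset.mem_image.mpr ⟨p, hp, rfl⟩)
          exact ⟨⟨p.2, hlt _ h1⟩, rfl, h1⟩)
      (by
        intro t ht
        obtain ⟨a, rfl, ha⟩ := (hmem' t).mp ht
        rw [hJ, Finset.mem_union, Finset.mem_image, Finset.mem_image] at ha
        rcases ha with ⟨p, hp, hp'⟩ | ⟨p, hp, hp'⟩
        · exact ⟨p, hp, Or.inl hp'.symm⟩
        · exact ⟨p, hp, Or.inr hp'.symm⟩)
    rw [← main, hlo, List.filterMap_map]
    congr 1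
    have : ∀ a : Fin n, ((fun t => (List.ofFn w)[t]?) ∘ (fun a : Fin n => (a : ℕ))) a
        = some (w a) := by
      intro a
      simp [List.getElem?_ofFn, List.ofFnNthVal, a.isLt]
    rw [List.filterMap_congr (fun a _ => this a)]
    exact (congrFun (List.filterMap_eq_map (f := w)) _).symm

lemma ncm_empty {k : ℕ} (X : List (Letter k)) : IsNCMatching X ∅ := by
  refine ⟨?_, ?_, ?_⟩ <;> simp

lemma ofFn_orderEmb {n r : ℕ} {α : Type*} (w : Fin n → α) (I : Finset (Fin n))
    (h : I.card = r) :
    List.ofFn (fun a : Fin r => w (I.orderEmbOfFin h a)) = (I.sort (· ≤ ·)).map w := by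
  apply List.ext_getElem
  · simp [h]
  · intro a h1 h2
    simp [List.getElem_ofFn, Finset.orderEmbOfFin_apply]

lemma oe_congr {n r : ℕ} {s t : Finset (Fin n)} (h : s = t) (hs : s.card = r)
    (ht : t.card = r) (a : Fin r) : s.orderEmbOfFin hs a = t.orderEmbOfFin ht a := by
  subst h; rfl

/-- `W(n,δ) ≤ C(n,r)·(2k)^r·|T_{2m}|` where `m = ⌈(n - nδ)/2⌉` and `r = n - 2m`:
a word with fewer than `nδ` unmatched letters is determined by the subword of
unmatched letters, the (trivial) subword of matched letters, and the unmatched positions. -/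
theorem count_small_ell_le (k n : ℕ) (hk : 2 ≤ k) (δ : ℝ) (h0 : 0 < δ) (h1 : δ < 1) :
    Nat.card {w : Fin n → Letter k // (ell (List.ofFn w) : ℝ) < n * δ} ≤
      Nat.choose n (n - 2 * ⌈((n : ℝ) - n * δ) / 2⌉₊) *
        (2 * k) ^ (n - 2 * ⌈((n : ℝ) - n * δ) / 2⌉₊) *
        Nat.card {z : Fin (2 * ⌈((n : ℝ) - n * δ) / 2⌉₊) → Letter k //
          FreeGroup.mk (List.ofFn z) = 1} := by
  classical
  set m := ⌈((n : ℝ) - n * δ) / 2⌉₊ with hm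
  set r := n - 2 * m with hr
  -- key existence
  have key : ∀ w : {w : Fin n → Letter k // (ell (List.ofFn w) : ℝ) < n * δ},
      ∃ I : Finset (Fin n), I.card = 2 * m ∧
        FreeGroup.mk ((I.sort (· ≤ ·)).map w.1) = 1 := by
    rintro ⟨w, hw⟩
    have hset : {c | ∃ M : Finset (ℕ × ℕ), IsNCMatching (List.ofFn w) M ∧
        c = (List.ofFn w).length - 2 * M.card}.Nonempty :=
      ⟨(List.ofFn w).length, ∅, ncm_empty _, by simp⟩
    obtain ⟨M, hM, hell⟩ := Nat.sInf_mem hset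
    have hlen : (List.ofFn w).length = n := List.length_ofFn (f := w)
    have he2 : ell (List.ofFn w) = n - 2 * M.card := by
      unfold ell
      rw [hell, hlen]
    have hwc : ((n - 2 * M.card : ℕ) : ℝ) < n * δ := by
      rw [← he2]; exact hw
    have hcard : m ≤ M.card := by
      rcases le_or_gt (2 * M.card) n with hc | hc
      · have h2 : ((n - 2 * M.card : ℕ) : ℝ) = (n : ℝ) - 2 * M.card := by
          push_cast [hc]; ring
        rw [hm]
        apply Nat.ceil_le.mpr
        rw [div_le_iff₀ (by norm_num : (0:ℝ) < 2)]
        push_cast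
        rw [h2] at hwc
        linarith
      · rw [hm]
        apply Nat.ceil_le.mpr
        rw [div_le_iff₀ (by norm_num : (0:ℝ) < 2)]
        have hnn : (0:ℝ) ≤ (n:ℝ) * δ := by positivity
        have : (n : ℝ) < 2 * M.card := by exact_mod_cast hc
        linarith
    obtain ⟨M', hsub, hM'card⟩ := Finset.exists_subset_card_eq hcard
    obtain ⟨I, hI1, hI2⟩ := exists_identity_subword w M' (ncm_mono hsub hM)
    exact ⟨I, by rw [hI1, hM'card], hI2⟩
  choose Ifun hIcard hImk using key
  have hcompl : ∀ w, ((Ifun w)ᶜ).card = r := by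
    intro w
    rw [Finset.card_compl, hIcard w, Fintype.card_fin, hr]
  -- injection
  set T := ({S : Finset (Fin n) // S.card = r} × (Fin r → Letter k) ×
    {z : Fin (2 * m) → Letter k // FreeGroup.mk (List.ofFn z) = 1}) with hT
  have hinj : ∃ F : {w : Fin n → Letter k // (ell (List.ofFn w) : ℝ) < n * δ} → T,
      Function.Injective F := by
    refine ⟨fun w => ⟨⟨(Ifun w)ᶜ, hcompl w⟩,
      fun a => w.1 ((Ifun w)ᶜ.orderEmbOfFin (hcompl w) a),
      ⟨fun a => w.1 ((Ifun w).orderEmbOfFin (hIcard w) a), ?_⟩⟩, ?_⟩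
    · rw [ofFn_orderEmb]
      exact hImk w
    · intro w w' h
      rw [Prod.ext_iff, Prod.ext_iff, Subtype.ext_iff, Subtype.ext_iff] at h
      obtain ⟨hS, hu, hz⟩ := h
      simp only at hS hu hz
      have hIeq : Ifun w = Ifun w' := by
        have := congrArg (·ᶜ) hS
        simpa using this
      apply Subtype.ext
      funext i
      by_cases hi : i ∈ Ifun w
      · obtain ⟨a, ha⟩ : ∃ a, (Ifun w).orderEmbOfFin (hIcard w) a = i := by
          have h1 : i ∈ Set.range ((Ifun w).orderEmbOfFin (hIcard w)) := by
            rw [Finset.range_orderEmbOfFin]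
            exact hi
          exact h1
        have e1 : w.1 i = w.1 ((Ifun w).orderEmbOfFin (hIcard w) a) := by rw [ha]
        have e2 := congrFun hz a
        have e3 : (Ifun w').orderEmbOfFin (hIcard w') a = i :=
          (oe_congr hIeq (hIcard w) (hIcard w') a).symm.trans ha
        rw [e1, e2, e3]
      · have hi' : i ∈ (Ifun w)ᶜ := Finset.mem_compl.mpr hi
        obtain ⟨a, ha⟩ : ∃ a, (Ifun w)ᶜ.orderEmbOfFin (hcompl w) a = i := by
          have h1 : i ∈ Set.range ((Ifun w)ᶜ.orderEmbOfFin (hcompl w)) := by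
            rw [Finset.range_orderEmbOfFin]
            exact hi'
          exact h1
        have hSeq : (Ifun w)ᶜ = (Ifun w')ᶜ := by rw [hIeq]
        have e1 : w.1 i = w.1 ((Ifun w)ᶜ.orderEmbOfFin (hcompl w) a) := by rw [ha]
        have e2 := congrFun hu a
        have e3 : (Ifun w')ᶜ.orderEmbOfFin (hcompl w') a = i :=
          (oe_congr hSeq (hcompl w) (hcompl w') a).symm.trans ha
        rw [e1, e2, e3]
  obtain ⟨F, hF⟩ := hinj
  have hle : Nat.card {w : Fin n → Letter k // (ell (List.ofFn w) : ℝ) < n * δ} ≤ Nat.card T :=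
    Nat.card_le_card_of_injective F hF
  refine hle.trans ?_
  rw [hT, Nat.card_prod, Nat.card_prod]
  have c1 : Nat.card {S : Finset (Fin n) // S.card = r} = n.choose r := by
    rw [Nat.card_eq_fintype_card, Fintype.card_finset_len, Fintype.card_fin]
  have c2 : Nat.card (Fin r → Letter k) = (2 * k) ^ r := by
    rw [Nat.card_eq_fintype_card, Fintype.card_fun]
    simp [mul_comm]
  rw [c1, c2, ← mul_assoc]
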